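/- For any constant 0 < ε ≤ 1/8 and positive integers n, k, there exists an (εnk, εk)-block-rigid matrix A ∈ F^{nk×nk} over any finite field F. -/

import Mathlib

open Matrix Finset

section aux
variable {F : Type*} [Field F] [Fintype F] [DecidableEq F]

lemma card_matrix_aux (m n : Type*) [Fintype m] [DecidableEq m] [Fintype n] [DecidableEq n] :
    Fintype.card (Matrix m n F)
      = Fintype.card F ^ (Fintype.card m * Fintype.card n) := by
  rw [show Fintype.card (Matrix m n F) = Fintype.card (m → n → F) from rfl,
    Fintype.card_fun, Fintype.card_fun, ← pow_mul, mul_comm]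


lemma exists_factorization {F : Type*} [Field F] {ι : Type*} [Fintype ι] [DecidableEq ι]
    (B : Matrix ι ι F) (r : ℕ) (h : B.rank ≤ r) :
    ∃ (P : Matrix ι (Fin r) F) (Q : Matrix (Fin r) ι F), B = P * Q := by
  classical
  set V := LinearMap.range B.mulVecLin with hV
  have hB : B = LinearMap.toMatrix' B.mulVecLin := by
    rw [← Matrix.toLin'_apply', LinearMap.toMatrix'_toLin']
  have hd : Module.finrank F V = B.rank := rfl
  rcases Nat.eq_zero_or_pos B.rank with h0 | hpos
  · -- rank zero: B = 0
    have hbot : V = ⊥ := Submodule.finrank_eq_zero.mp (hd.trans h0)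
    have : B.mulVecLin = 0 := by
      apply LinearMap.range_eq_bot.mp hbot
    refine ⟨0, 0, ?_⟩
    rw [hB, this]
    ext i j
    simp [LinearMap.toMatrix'_apply]
  · have hdr : B.rank ≤ r := h
    let bV : Module.Basis (Fin B.rank) F V := by
      have : Module.finrank F V = B.rank := hd
      exact (Module.finBasis F V).reindex (finCongr this)
    let e : V ≃ₗ[F] (Fin B.rank → F) := bV.equivFun
    let ret : Fin r → Fin B.rank := fun j =>
      if hj : (j : ℕ) < B.rank then ⟨j, hj⟩ else ⟨0, hpos⟩
    let f : (ι → F) →ₗ[F] (Fin r → F) :=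
      (LinearMap.funLeft F F ret).comp (e.toLinearMap.comp B.mulVecLin.rangeRestrict)
    let g : (Fin r → F) →ₗ[F] (ι → F) :=
      V.subtype.comp (e.symm.toLinearMap.comp (LinearMap.funLeft F F (Fin.castLE hdr)))
    have hgf : g.comp f = B.mulVecLin := by
      refine LinearMap.ext fun v => ?_
      show g (f v) = B.mulVecLin v
      have hmid : (LinearMap.funLeft F F (Fin.castLE hdr))
          ((LinearMap.funLeft F F ret) (e (B.mulVecLin.rangeRestrict v)))
          = e (B.mulVecLin.rangeRestrict v) := by
        funext j
        simp only [LinearMap.funLeft_apply]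
        congr 1
        simp [ret, Fin.castLE]
      simp only [g, f, LinearMap.comp_apply, LinearEquiv.coe_coe, hmid,
        LinearEquiv.symm_apply_apply]
      rfl
    refine ⟨LinearMap.toMatrix' g, LinearMap.toMatrix' f, ?_⟩
    rw [hB, ← hgf, LinearMap.toMatrix'_comp]


-- (iii) number of small subsets
lemma subsets_card_bound (k m : ℕ) :
    ((Finset.univ.filter fun T : Finset (Fin k) => T.card ≤ m).card) * 7 ^ (k - m)
      ≤ 8 ^ k := by
  have h8 : (8 : ℕ) ^ k = ∑ T : Finset (Fin k), 7 ^ (k - T.card) := by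
    have := Finset.prod_add (fun _ : Fin k => (1 : ℕ)) (fun _ : Fin k => (7 : ℕ)) Finset.univ
    simp only [Finset.prod_const_one, one_mul, Finset.prod_const, Finset.card_univ,
      Fintype.card_fin, Finset.powerset_univ] at this
    rw [show ((1:ℕ)+7) = 8 from rfl] at this
    rw [this]
    apply Finset.sum_congr rfl
    intro T _
    rw [Finset.card_sdiff_of_subset (Finset.subset_univ T), Finset.card_univ, Fintype.card_fin]
  calc ((Finset.univ.filter fun T : Finset (Fin k) => T.card ≤ m).card) * 7 ^ (k - m)
      = ∑ T ∈ Finset.univ.filter (fun T : Finset (Fin k) => T.card ≤ m), 7 ^ (k - m) := by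
        rw [Finset.sum_const, smul_eq_mul]
    _ ≤ ∑ T ∈ Finset.univ.filter (fun T : Finset (Fin k) => T.card ≤ m), 7 ^ (k - T.card) := by
        apply Finset.sum_le_sum
        intro T hT
        exact Nat.pow_le_pow_right (by norm_num)
          (Nat.sub_le_sub_left (Finset.mem_filter.mp hT).2 k)
    _ ≤ ∑ T : Finset (Fin k), 7 ^ (k - T.card) :=
        Finset.sum_le_sum_of_subset (Finset.filter_subset _ _)
    _ = 8 ^ k := h8.symm

-- key arithmetic inequality
lemma key_count (q S k n r m : ℕ) (hq2 : 2 ≤ q) (hk : 1 ≤ k) (hn : 1 ≤ n)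
    (hr : 8 * r ≤ k * n) (hm : 8 * m ≤ k) (hS : S * 7 ^ (k - m) ≤ 8 ^ k) :
    q ^ ((k*n) * r) * (q ^ (r * (k*n)) * (S ^ k * q ^ ((k*n) * (m*n))))
      < q ^ ((k*n) * (k*n)) := by
  set K := k * n with hK
  set a := K * r + (r * K + K * (m*n)) with ha
  have hq0 : 0 < q := by omega
  have h8a : 8 * a ≤ 3 * (K * K) := by
    have h1 : 8 * (K * r) ≤ K * K := by
      calc 8 * (K * r) = K * (8 * r) := by ring
        _ ≤ K * K := Nat.mul_le_mul_left K hr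
    have h2 : 8 * (r * K) ≤ K * K := by
      calc 8 * (r * K) = K * (8 * r) := by ring
        _ ≤ K * K := Nat.mul_le_mul_left K hr
    have h3 : 8 * (K * (m*n)) ≤ K * K := by
      calc 8 * (K * (m*n)) = K * ((8 * m) * n) := by ring
        _ ≤ K * (k * n) := Nat.mul_le_mul_left K (Nat.mul_le_mul_right n hm)
        _ = K * K := by rw [hK]
    omega
  have haK : a ≤ K * K := by omega
  set e := K * K - a with he
  have h8e : 5 * (K * K) ≤ 8 * e := by omega
  have hkk : k * k ≤ K * K := by
    have : k ≤ K := by calc k = k * 1 := (Nat.mul_one k).symm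
                          _ ≤ k * n := Nat.mul_le_mul_left k hn
    exact Nat.mul_le_mul this this
  -- main step : S ^ k < q ^ e
  have hstep : S ^ k < q ^ e := by
    have h1 : S ^ k * 7 ^ ((k - m) * k) ≤ 8 ^ (k * k) := by
      calc S ^ k * 7 ^ ((k - m) * k) = (S * 7 ^ (k - m)) ^ k := by
            rw [mul_pow, ← pow_mul]
        _ ≤ (8 ^ k) ^ k := Nat.pow_le_pow_left hS k
        _ = 8 ^ (k * k) := by rw [← pow_mul]
    have h2 : 8 ^ (k * k) < q ^ e * 7 ^ ((k - m) * k) := by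
      apply lt_of_pow_lt_pow_left₀ 8 (Nat.zero_le _)
      have lhs8 : (8 ^ (k*k)) ^ 8 = 2 ^ (19 * (k*k)) * 2 ^ (5 * (k*k)) := by
        rw [← pow_add]
        rw [show (8:ℕ) = 2^3 from rfl, ← pow_mul, ← pow_mul]
        ring_nf
      have rhs8 : (q ^ e * 7 ^ ((k - m) * k)) ^ 8 = q ^ (8 * e) * 7 ^ (8 * ((k-m)*k)) := by
        rw [mul_pow, ← pow_mul, ← pow_mul]
        ring_nf
      rw [lhs8, rhs8]
      have hc1 : 2 ^ (19 * (k*k)) < 7 ^ (7 * (k*k)) := by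
        have : (2:ℕ) ^ (19 * (k*k)) = (2^19) ^ (k*k) := by rw [← pow_mul]
        rw [this, show (7:ℕ) ^ (7 * (k*k)) = (7^7) ^ (k*k) by rw [← pow_mul]]
        have hkk1 : 1 ≤ k * k := Nat.mul_le_mul hk hk
        exact Nat.pow_lt_pow_left (by norm_num) (by omega)
      have hc2 : 2 ^ (5 * (k*k)) ≤ q ^ (8 * e) := by
        calc 2 ^ (5 * (k*k)) ≤ 2 ^ (8 * e) :=
              Nat.pow_le_pow_right (by norm_num) (by omega)
          _ ≤ q ^ (8 * e) := Nat.pow_le_pow_left hq2 _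
      have hc3 : 7 ^ (7 * (k*k)) ≤ 7 ^ (8 * ((k-m)*k)) := by
        apply Nat.pow_le_pow_right (by norm_num)
        have : 7 * k ≤ 8 * (k - m) := by omega
        calc 7 * (k * k) = (7 * k) * k := by ring
          _ ≤ (8 * (k-m)) * k := Nat.mul_le_mul_right k this
          _ = 8 * ((k-m)*k) := by ring
      calc 2 ^ (19*(k*k)) * 2 ^ (5*(k*k))
          < 7 ^ (7*(k*k)) * 2 ^ (5*(k*k)) := by
            apply Nat.mul_lt_mul_right (Nat.pow_pos (by norm_num)) |>.mpr hc1
        _ ≤ 7 ^ (8*((k-m)*k)) * q ^ (8*e) := Nat.mul_le_mul hc3 hc2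
        _ = q ^ (8*e) * 7 ^ (8*((k-m)*k)) := by ring
    have h7pos : 0 < 7 ^ ((k - m) * k) := Nat.pow_pos (by norm_num)
    have := lt_of_le_of_lt h1 h2
    exact lt_of_mul_lt_mul_right this (Nat.zero_le _)
  calc q ^ (K * r) * (q ^ (r * K) * (S ^ k * q ^ (K * (m*n))))
      = S ^ k * q ^ a := by rw [ha, pow_add, pow_add]; ring
    _ < q ^ e * q ^ a := by
        apply Nat.mul_lt_mul_right (Nat.pow_pos hq0) |>.mpr hstep
    _ = q ^ (K * K) := by rw [← pow_add, he]; congr 1; omega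


-- matrices supported on a given support function
lemma supported_card_bound (n k m : ℕ) (f : Fin k → Finset (Fin k))
    (hf : ∀ i, (f i).card ≤ m) :
    (Finset.univ.filter fun C : Matrix (Fin k × Fin n) (Fin k × Fin n) F =>
       ∀ i a j b, j ∉ f i → C (i,a) (j,b) = 0).card
      ≤ (Fintype.card F) ^ ((k*n) * (m*n)) := by
  classical
  set E := {p : (Fin k × Fin n) × (Fin k × Fin n) // p.2.1 ∈ f p.1.1} with hE
  have hcardE : Fintype.card E ≤ (k*n) * (m*n) := by
    have hinj : Function.Injective (fun e : E =>
        ((e.1.1), ((Fin.castLE (hf e.1.1.1) ((f e.1.1.1).equivFin ⟨e.1.2.1, e.2⟩)), e.1.2.2))) := by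
      rintro ⟨⟨⟨i,a⟩,⟨j,b⟩⟩,hj⟩ ⟨⟨⟨i',a'⟩,⟨j',b'⟩⟩,hj'⟩ h
      simp only [Prod.mk.injEq] at h
      obtain ⟨⟨hi, ha⟩, hcast, hb⟩ := h
      subst hi; subst ha; subst hb
      have hval := congrArg Fin.val hcast
      simp only [Fin.coe_castLE] at hval
      have : ((f i).equivFin ⟨j, hj⟩ : Fin (f i).card) = (f i).equivFin ⟨j', hj'⟩ :=
        Fin.ext hval
      have := (f i).equivFin.injective this
      simp only [Subtype.mk.injEq] at this
      subst this
      rfl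
    calc Fintype.card E ≤ Fintype.card ((Fin k × Fin n) × (Fin m × Fin n)) :=
          Fintype.card_le_of_injective _ hinj
      _ = (k*n) * (m*n) := by simp
  calc (Finset.univ.filter fun C : Matrix (Fin k × Fin n) (Fin k × Fin n) F =>
       ∀ i a j b, j ∉ f i → C (i,a) (j,b) = 0).card
      ≤ (Finset.univ : Finset (E → F)).card := by
        apply Finset.card_le_card_of_injOn (fun C e => C e.1.1 e.1.2)
          (fun _ _ => Finset.mem_univ _)
        intro C hC C' hC' h
        simp only [Finset.mem_coe, Finset.mem_filter] at hC hC'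
        funext p q
        obtain ⟨i, a⟩ := p
        obtain ⟨j, b⟩ := q
        by_cases hj : j ∈ f i
        · exact congrFun h (⟨((i,a),(j,b)), hj⟩ : E)
        · rw [hC.2 i a j b hj, hC'.2 i a j b hj]
      _ = (Fintype.card F) ^ (Fintype.card E) := by
        rw [Finset.card_univ, Fintype.card_fun]
      _ ≤ (Fintype.card F) ^ ((k*n) * (m*n)) := by
        apply Nat.pow_le_pow_right (Fintype.card_pos) hcardE

lemma suppfun_card_bound (k m : ℕ) :
    (Finset.univ.filter fun f : Fin k → Finset (Fin k) => ∀ i, (f i).card ≤ m).card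
      ≤ ((Finset.univ.filter fun T : Finset (Fin k) => T.card ≤ m).card) ^ k := by
  classical
  rw [← Fintype.card_subtype, ← Fintype.card_subtype]
  calc Fintype.card {f : Fin k → Finset (Fin k) // ∀ i, (f i).card ≤ m}
      ≤ Fintype.card (Fin k → {T : Finset (Fin k) // T.card ≤ m}) := by
        apply Fintype.card_le_of_injective (fun f i => ⟨f.1 i, f.2 i⟩)
        rintro ⟨f, hf⟩ ⟨g, hg⟩ h
        simp only [Subtype.mk.injEq] at h ⊢
        funext i
        exact congrArg Subtype.val (congrFun h i)
      _ = (Fintype.card {T : Finset (Fin k) // T.card ≤ m}) ^ k := by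
        rw [Fintype.card_fun, Fintype.card_fin]

lemma sparse_card_bound (n k m : ℕ) :
    (Finset.univ.filter fun C : Matrix (Fin k × Fin n) (Fin k × Fin n) F =>
       ∀ i : Fin k,
         (Finset.univ.filter fun j : Fin k => ∃ a b, C (i,a) (j,b) ≠ 0).card ≤ m).card
      ≤ ((Finset.univ.filter fun T : Finset (Fin k) => T.card ≤ m).card) ^ k
          * (Fintype.card F) ^ ((k*n) * (m*n)) := by
  classical
  set SuppFuns := Finset.univ.filter
    (fun f : Fin k → Finset (Fin k) => ∀ i, (f i).card ≤ m) with hSF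
  have hsub : (Finset.univ.filter fun C : Matrix (Fin k × Fin n) (Fin k × Fin n) F =>
       ∀ i : Fin k,
         (Finset.univ.filter fun j : Fin k => ∃ a b, C (i,a) (j,b) ≠ 0).card ≤ m)
      ⊆ SuppFuns.biUnion (fun f => Finset.univ.filter
          fun C : Matrix (Fin k × Fin n) (Fin k × Fin n) F =>
            ∀ i a j b, j ∉ f i → C (i,a) (j,b) = 0) := by
    intro C hC
    rw [Finset.mem_filter] at hC
    rw [Finset.mem_biUnion]
    refine ⟨fun i => Finset.univ.filter fun j : Fin k => ∃ a b, C (i,a) (j,b) ≠ 0, ?_, ?_⟩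
    · rw [hSF, Finset.mem_filter]
      exact ⟨Finset.mem_univ _, hC.2⟩
    · rw [Finset.mem_filter]
      refine ⟨Finset.mem_univ _, ?_⟩
      intro i a j b hj
      simp only [Finset.mem_filter, Finset.mem_univ, true_and, not_exists, not_not] at hj
      exact hj a b
  calc _ ≤ (SuppFuns.biUnion _).card := Finset.card_le_card hsub
    _ ≤ ∑ f ∈ SuppFuns, (Finset.univ.filter
          fun C : Matrix (Fin k × Fin n) (Fin k × Fin n) F =>
            ∀ i a j b, j ∉ f i → C (i,a) (j,b) = 0).card := Finset.card_biUnion_le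
    _ ≤ ∑ f ∈ SuppFuns, (Fintype.card F) ^ ((k*n) * (m*n)) := by
        apply Finset.sum_le_sum
        intro f hf
        rw [hSF, Finset.mem_filter] at hf
        exact supported_card_bound n k m f hf.2
    _ = SuppFuns.card * (Fintype.card F) ^ ((k*n) * (m*n)) := by
        rw [Finset.sum_const, smul_eq_mul]
    _ ≤ _ := Nat.mul_le_mul_right _ (suppfun_card_bound k m)

end aux



/-- `(r, s)`-block-rigidity: the matrix `A ∈ F^{nk×nk}`, viewed as a `k × k` block matrix
with `n × n` blocks (rows/columns indexed by `Fin k × Fin n`), cannot be written as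
`B + C` with `rank B ≤ r` and `C` having at most `s` non-zero blocks in each block-row. -/
def IsBlockRigidMatrix {F : Type*} [Field F] [DecidableEq F] {n k : ℕ}
    (A : Matrix (Fin k × Fin n) (Fin k × Fin n) F) (r s : ℝ) : Prop :=
  ¬ ∃ B C : Matrix (Fin k × Fin n) (Fin k × Fin n) F, A = B + C ∧ (B.rank : ℝ) ≤ r ∧
      ∀ i : Fin k,
        ((Finset.univ.filter fun j : Fin k => ∃ a b, C (i, a) (j, b) ≠ 0).card : ℝ) ≤ s

theorem stmt_6 {F : Type*} [Field F] [Fintype F] [DecidableEq F]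
    (ε : ℝ) (hε : 0 < ε) (hε' : ε ≤ 1 / 8) (n k : ℕ) (hn : 0 < n) (hk : 0 < k) :
    ∃ A : Matrix (Fin k × Fin n) (Fin k × Fin n) F,
      IsBlockRigidMatrix A (ε * (n * k)) (ε * k) := by
  classical
  set q := Fintype.card F with hq
  set r := (k * n) / 8 with hrdef
  set m := k / 8 with hmdef
  set S := ((Finset.univ.filter fun T : Finset (Fin k) => T.card ≤ m).card) with hSdef
  set Sparse : Finset (Matrix (Fin k × Fin n) (Fin k × Fin n) F) :=
    Finset.univ.filter (fun C => ∀ i : Fin k,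
      (Finset.univ.filter fun j : Fin k => ∃ a b, C (i,a) (j,b) ≠ 0).card ≤ m) with hSp
  set R : Finset (Matrix (Fin k × Fin n) (Fin k × Fin n) F) :=
    ((Finset.univ : Finset (Matrix (Fin k × Fin n) (Fin r) F)) ×ˢ
      ((Finset.univ : Finset (Matrix (Fin r) (Fin k × Fin n) F)) ×ˢ Sparse)).image
      (fun x => x.1 * x.2.1 + x.2.2) with hR
  have hq2 : 2 ≤ q := Fintype.one_lt_card
  have hcard_all : Fintype.card (Matrix (Fin k × Fin n) (Fin k × Fin n) F)
      = q ^ ((k*n) * (k*n)) := by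
    rw [card_matrix_aux]
    simp [hq]
  have hcardR : R.card < Fintype.card (Matrix (Fin k × Fin n) (Fin k × Fin n) F) := by
    rw [hcard_all]
    calc R.card ≤ ((Finset.univ : Finset (Matrix (Fin k × Fin n) (Fin r) F)) ×ˢ
        ((Finset.univ : Finset (Matrix (Fin r) (Fin k × Fin n) F)) ×ˢ Sparse)).card :=
          Finset.card_image_le
      _ = q ^ ((k*n) * r) * (q ^ (r * (k*n)) * Sparse.card) := by
          rw [Finset.card_product, Finset.card_product, Finset.card_univ, Finset.card_univ,
            card_matrix_aux, card_matrix_aux]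
          simp [hq]
      _ ≤ q ^ ((k*n) * r) * (q ^ (r * (k*n)) * (S ^ k * q ^ ((k*n) * (m*n)))) := by
          apply Nat.mul_le_mul_left
          apply Nat.mul_le_mul_left
          exact sparse_card_bound n k m
      _ < q ^ ((k*n) * (k*n)) := by
          apply key_count q S k n r m hq2 hk hn
          · rw [hrdef, mul_comm]
            exact Nat.div_mul_le_self (k*n) 8
          · rw [hmdef, mul_comm]
            exact Nat.div_mul_le_self k 8
          · exact subsets_card_bound k m
  have hex : ∃ A : Matrix (Fin k × Fin n) (Fin k × Fin n) F, A ∉ R := by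
    by_contra hcon
    push_neg at hcon
    have hsub : (Finset.univ : Finset (Matrix (Fin k × Fin n) (Fin k × Fin n) F)) ⊆ R :=
      fun x _ => hcon x
    have := Finset.card_le_card hsub
    rw [Finset.card_univ] at this
    omega
  obtain ⟨A, hA⟩ := hex
  refine ⟨A, ?_⟩
  rintro ⟨B, C, hABC, hB, hC⟩
  apply hA
  have hnk0 : (0:ℝ) ≤ (n:ℝ) * (k:ℝ) := by positivity
  have hrank : B.rank ≤ r := by
    have h1 : (B.rank : ℝ) * 8 ≤ (n:ℝ) * (k:ℝ) := by nlinarith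
    have h2 : B.rank * 8 ≤ n * k := by exact_mod_cast h1
    rw [hrdef, Nat.le_div_iff_mul_le (by norm_num : 0 < 8), Nat.mul_comm k n]
    omega
  obtain ⟨P, Q, hPQ⟩ := exists_factorization B r hrank
  have hCsp : C ∈ Sparse := by
    rw [hSp, Finset.mem_filter]
    refine ⟨Finset.mem_univ _, fun i => ?_⟩
    have h1 := hC i
    have hk0 : (0:ℝ) ≤ (k:ℝ) := by positivity
    have h2 : ((Finset.univ.filter fun j : Fin k => ∃ a b, C (i, a) (j, b) ≠ 0).card : ℝ) * 8
        ≤ (k:ℝ) := by nlinarith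
    have h3 : (Finset.univ.filter fun j : Fin k => ∃ a b, C (i, a) (j, b) ≠ 0).card * 8 ≤ k := by
      exact_mod_cast h2
    rw [hmdef, Nat.le_div_iff_mul_le (by norm_num : 0 < 8)]
    omega
  rw [hR, Finset.mem_image]
  refine ⟨(P, (Q, C)), ?_, ?_⟩
  · rw [Finset.mem_product, Finset.mem_product]
    exact ⟨Finset.mem_univ _, Finset.mem_univ _, hCsp⟩
  · rw [← hPQ, ← hABC]
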